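/- Let F be a bounded operator with closed range on a Hilbert space, with polar decomposition F = U|F|, and let X be a partial isometry such that F − X is compact. Then the essential spectrum of |F| is contained in {0, 1}. -/

import Mathlib

noncomputable section

/-- The sequence space ℓ² over ℂ. -/
abbrev L2C : Type := lp (fun _ : ℕ => ℂ) 2

/-- The standard orthonormal basis vectors of ℓ². -/
def stdVec (i : ℕ) : L2C := lp.single 2 i 1

/-- A bounded operator between Hilbert spaces is a partial isometry if it is
isometric on the orthogonal complement of its kernel. -/
def IsPartialIsometry {E F : Type*} [NormedAddCommGroup E] [InnerProductSpace ℂ E]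
    [NormedAddCommGroup F] [InnerProductSpace ℂ F] (X : E →L[ℂ] F) : Prop :=
  ∀ v ∈ (LinearMap.ker (X : E →ₗ[ℂ] F))ᗮ, ‖X v‖ = ‖v‖

/-- A bounded operator from ℓ² is Hilbert–Schmidt if the squared norms of the images
of the standard basis vectors are summable. -/
def IsHS {H : Type*} [NormedAddCommGroup H] [InnerProductSpace ℂ H]
    (T : L2C →L[ℂ] H) : Prop := Summable fun i => ‖T (stdVec i)‖ ^ 2

/-- Squared Hilbert–Schmidt norm of a bounded operator from ℓ². -/
def hsNormSq {H : Type*} [NormedAddCommGroup H] [InnerProductSpace ℂ H]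
    (T : L2C →L[ℂ] H) : ℝ := ∑' i, ‖T (stdVec i)‖ ^ 2

/-- `U` is the partial isometry in the polar decomposition `F = U|F|` of `F`:
`U` is a partial isometry with the same kernel as `F`, `U* F = |F|` is positive
and `F = U (U* F)`. -/
def IsPolarDecomp {H : Type*} [NormedAddCommGroup H] [InnerProductSpace ℂ H]
    [CompleteSpace H] (F U : L2C →L[ℂ] H) : Prop :=
  IsPartialIsometry U ∧ LinearMap.ker (U : L2C →ₗ[ℂ] H) = LinearMap.ker (F : L2C →ₗ[ℂ] H) ∧
  (ContinuousLinearMap.adjoint U ∘L F).IsPositive ∧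
  F = U ∘L (ContinuousLinearMap.adjoint U ∘L F)

/-- A pair of projections `(P, Q)` is a Fredholm pair if `ker Q ∩ ran P` and
`ran Q ∩ ker P` are both finite dimensional. -/
def FredholmPair {E : Type*} [NormedAddCommGroup E] [InnerProductSpace ℂ E]
    (P Q : E →L[ℂ] E) : Prop :=
  FiniteDimensional ℂ ↥(LinearMap.ker (Q : E →ₗ[ℂ] E) ⊓ LinearMap.range (P : E →ₗ[ℂ] E)) ∧
  FiniteDimensional ℂ ↥(LinearMap.range (Q : E →ₗ[ℂ] E) ⊓ LinearMap.ker (P : E →ₗ[ℂ] E))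

/-- The index of a Fredholm pair of projections:
`j(P,Q) = dim(ker Q ∩ ran P) - dim(ran Q ∩ ker P)`. -/
def pairIndex {E : Type*} [NormedAddCommGroup E] [InnerProductSpace ℂ E]
    (P Q : E →L[ℂ] E) : ℤ :=
  (Module.finrank ℂ ↥(LinearMap.ker (Q : E →ₗ[ℂ] E) ⊓ LinearMap.range (P : E →ₗ[ℂ] E)) : ℤ) -
  (Module.finrank ℂ ↥(LinearMap.range (Q : E →ₗ[ℂ] E) ⊓ LinearMap.ker (P : E →ₗ[ℂ] E)) : ℤ)


/-- `z` lies in the essential spectrum of `T` iff `T - z•1` is not invertible modulo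
compact operators. -/
def InEssentialSpectrum {E : Type*} [NormedAddCommGroup E] [InnerProductSpace ℂ E]
    (T : E →L[ℂ] E) (z : ℂ) : Prop :=
  ¬ ∃ S : E →L[ℂ] E, IsCompactOperator ⇑((S ∘L (T - z • 1) - 1 : E →L[ℂ] E)) ∧
      IsCompactOperator ⇑(((T - z • 1) ∘L S - 1 : E →L[ℂ] E))


open ContinuousLinearMap Metric

local notation "⟪" x ", " y "⟫" => @inner ℂ _ _ x y

lemma aux_pi_proj {E F : Type*} [NormedAddCommGroup E] [InnerProductSpace ℂ E]
    [NormedAddCommGroup F] [InnerProductSpace ℂ F] [CompleteSpace E] [CompleteSpace F]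
    (X : E →L[ℂ] F) (hX : IsPartialIsometry X) :
    (adjoint X ∘L X) ∘L (adjoint X ∘L X) = adjoint X ∘L X := by
  set K : Submodule ℂ E := LinearMap.ker (X : E →ₗ[ℂ] F) with hK
  haveI : CompleteSpace K := X.isClosed_ker.completeSpace_coe
  set Pr : E →L[ℂ] E := Kᗮ.subtypeL ∘L Submodule.orthogonalProjection Kᗮ with hPr
  have hinner : ∀ v w : Kᗮ, ⟪X v, X w⟫ = ⟪(v : E), (w : E)⟫ := by
    have hn : ∀ v : Kᗮ, ‖(X.toLinearMap.comp Kᗮ.subtype) v‖ = ‖v‖ := by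
      intro v
      simpa using hX v v.2
    have := (LinearMap.norm_map_iff_inner_map_map (𝕜 := ℂ)
      (X.toLinearMap.comp Kᗮ.subtype)).mp hn
    intro v w
    simpa using this v w
  have hsub : ∀ u : E, u - Pr u ∈ K := by
    intro u
    have h1 : u - (Submodule.orthogonalProjection Kᗮ u : E) ∈ Kᗮᗮ :=
      Submodule.sub_starProjection_mem_orthogonal (K := Kᗮ) u
    rwa [Submodule.orthogonal_orthogonal K] at h1
  have hXP : ∀ u : E, X u = X (Pr u) := by
    intro u
    have : X (u - Pr u) = 0 := by
      have := hsub u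
      rw [hK] at this
      exact this
    rw [map_sub, sub_eq_zero] at this
    exact this
  have key : adjoint X ∘L X = Pr := by
    ext u
    apply ext_inner_right ℂ
    intro w
    rw [comp_apply, adjoint_inner_left, hXP u, hXP w]
    have h1 : ⟪X (Pr u), X (Pr w)⟫ = ⟪(Pr u : E), (Pr w : E)⟫ :=
      hinner (Submodule.orthogonalProjection Kᗮ u) (Submodule.orthogonalProjection Kᗮ w)
    rw [h1]
    have h2 : ⟪(Pr u : E), w - Pr w⟫ = 0 :=
      Submodule.inner_left_of_mem_orthogonal (K := K) (hsub w)
        ((Submodule.orthogonalProjection Kᗮ u).2)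
    rw [inner_sub_right] at h2
    exact (sub_eq_zero.mp h2).symm
  rw [key, hPr]
  ext u
  simp [Submodule.orthogonalProjection_mem_subspace_eq_self]
  rw [← ContinuousLinearMap.mul_apply, K.isIdempotentElem_starProjection.eq, sub_self]

lemma aux_adjoint_compact {E F : Type*} [NormedAddCommGroup E] [InnerProductSpace ℂ E]
    [NormedAddCommGroup F] [InnerProductSpace ℂ F] [CompleteSpace E] [CompleteSpace F]
    (A : E →L[ℂ] F) (hA : IsCompactOperator ⇑A) : IsCompactOperator ⇑(adjoint A) := by
  have hAA : IsCompactOperator ⇑(A ∘L adjoint A) := by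
    rw [coe_comp']
    exact hA.comp_clm (adjoint A)
  -- the image of the unit ball under AA† sits in a compact set
  obtain ⟨C, hC, hCsub⟩ := hAA.image_subset_compact_of_bounded
    (S := closedBall (0 : F) 1) isBounded_closedBall
  -- key inequality
  have hineq : ∀ d : F, ‖adjoint A d‖ ^ 2 ≤ ‖(A ∘L adjoint A) d‖ * ‖d‖ := by
    intro d
    have h1 : (‖adjoint A d‖ : ℝ) ^ 2 = RCLike.re ⟪adjoint A d, adjoint A d⟫ :=
      (inner_self_eq_norm_sq (𝕜 := ℂ) _).symm
    have h2 : ⟪adjoint A d, adjoint A d⟫ = ⟪d, (A ∘L adjoint A) d⟫ := by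
      rw [adjoint_inner_left]; rfl
    calc ‖adjoint A d‖ ^ 2 = RCLike.re ⟪d, (A ∘L adjoint A) d⟫ := by rw [h1, h2]
      _ ≤ ‖(⟪d, (A ∘L adjoint A) d⟫ : ℂ)‖ := RCLike.re_le_norm _
      _ ≤ ‖d‖ * ‖(A ∘L adjoint A) d‖ := norm_inner_le_norm _ _
      _ = ‖(A ∘L adjoint A) d‖ * ‖d‖ := mul_comm _ _
  -- D is totally bounded
  have hTB : TotallyBounded ((⇑(adjoint A)) '' closedBall (0 : F) 1) := by
    rw [Metric.totallyBounded_iff]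
    intro ε hε
    have hCtb : TotallyBounded ((⇑(A ∘L adjoint A)) '' closedBall (0 : F) 1) :=
      (hC.totallyBounded).subset hCsub
    have hδ : (0:ℝ) < ε ^ 2 / 2 := by positivity
    obtain ⟨t, htsub, htfin, htcov⟩ := hCtb.exists_subset (Metric.dist_mem_uniformity hδ)
    -- choose preimages
    choose! g hg1 hg2 using fun c (hc : c ∈ t) => htsub hc
    refine ⟨(fun c => adjoint A (g c)) '' t, htfin.image _, ?_⟩
    rintro - ⟨y, hy, rfl⟩
    have hyim := htcov ⟨y, hy, rfl⟩
    simp only [Set.mem_iUnion, Set.mem_setOf_eq, exists_prop] at hyim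
    obtain ⟨c, hct, hdist⟩ := hyim
    rw [dist_eq_norm] at hdist
    have hgy : g c ∈ closedBall (0 : F) 1 := hg1 c hct
    have hgc : (A ∘L adjoint A) (g c) = c := hg2 c hct
    simp only [Set.mem_iUnion, mem_ball, exists_prop]
    refine ⟨adjoint A (g c), ⟨c, hct, rfl⟩, ?_⟩
    have key : ‖adjoint A y - adjoint A (g c)‖ ^ 2 ≤
        ‖(A ∘L adjoint A) y - (A ∘L adjoint A) (g c)‖ * ‖y - g c‖ := by
      have := hineq (y - g c)
      simpa [map_sub] using this
    have hnorm2 : ‖y - g c‖ ≤ 2 := by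
      have h1 : ‖y‖ ≤ 1 := by simpa using hy
      have h2 : ‖g c‖ ≤ 1 := by simpa using hgy
      calc ‖y - g c‖ ≤ ‖y‖ + ‖g c‖ := norm_sub_le _ _
        _ ≤ 2 := by linarith
    have hdist2 : ‖(A ∘L adjoint A) y - (A ∘L adjoint A) (g c)‖ < ε ^ 2 / 2 := by
      rw [hgc]
      exact hdist
    have hsq : ‖adjoint A y - adjoint A (g c)‖ ^ 2 < ε ^ 2 := by
      calc ‖adjoint A y - adjoint A (g c)‖ ^ 2
          ≤ ‖(A ∘L adjoint A) y - (A ∘L adjoint A) (g c)‖ * ‖y - g c‖ := key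
        _ ≤ ‖(A ∘L adjoint A) y - (A ∘L adjoint A) (g c)‖ * 2 := by
            apply mul_le_mul_of_nonneg_left hnorm2 (norm_nonneg _)
        _ < (ε ^ 2 / 2) * 2 := by
            apply mul_lt_mul_of_pos_right hdist2; norm_num
        _ = ε ^ 2 := by ring
    rw [dist_eq_norm]
    nlinarith [norm_nonneg (adjoint A y - adjoint A (g c))]
  -- conclude
  refine ⟨closure ((⇑(adjoint A)) '' closedBall (0 : F) 1),
    TotallyBounded.isCompact_of_isClosed hTB.closure isClosed_closure, ?_⟩
  have : closedBall (0 : F) 1 ⊆ (⇑(adjoint A)) ⁻¹'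
      closure ((⇑(adjoint A)) '' closedBall (0 : F) 1) := by
    intro y hy
    exact subset_closure ⟨y, hy, rfl⟩
  exact Filter.mem_of_superset (closedBall_mem_nhds 0 one_pos) this

lemma aux_pos_add_one_inv {E : Type*} [NormedAddCommGroup E] [InnerProductSpace ℂ E]
    [CompleteSpace E] (T : E →L[ℂ] E) (hT : T.IsPositive) :
    ∃ S : E →L[ℂ] E, S ∘L (T + 1) = 1 ∧ (T + 1) ∘L S = 1 := by
  set A : E →L[ℂ] E := T + 1 with hA
  have heq : ∀ v : E, RCLike.re ⟪A v, v⟫ = RCLike.re ⟪T v, v⟫ + ‖v‖ ^ 2 := by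
    intro v
    simp only [hA, add_apply, ContinuousLinearMap.one_apply, inner_add_left, map_add,
      inner_self_eq_norm_sq (𝕜 := ℂ)]
  have hlow : ∀ v : E, ‖v‖ ≤ ‖A v‖ := by
    intro v
    rcases eq_or_ne v 0 with rfl | hv
    · simp
    have h1 : ‖v‖ ^ 2 ≤ RCLike.re ⟪A v, v⟫ := by
      rw [heq v]
      have := (RCLike.nonneg_iff (K := ℂ)).mp (hT.inner_nonneg_left v) |>.1
      linarith
    have h2 : RCLike.re ⟪A v, v⟫ ≤ ‖A v‖ * ‖v‖ := by
      calc RCLike.re ⟪A v, v⟫ ≤ ‖(⟪A v, v⟫ : ℂ)‖ := RCLike.re_le_norm _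
        _ ≤ ‖A v‖ * ‖v‖ := norm_inner_le_norm _ _
    have hvpos : 0 < ‖v‖ := norm_pos_iff.mpr hv
    nlinarith
  have hanti : AntilipschitzWith 1 ⇑A :=
    A.antilipschitz_of_bound (K := 1) (fun x => by simpa using hlow x)
  have hinj : LinearMap.ker (A : E →ₗ[ℂ] E) = ⊥ :=
    LinearMap.ker_eq_bot.mpr hanti.injective
  have hclosed : IsClosed (Set.range ⇑A) :=
    hanti.isClosed_range A.uniformContinuous
  have hsurj : LinearMap.range (A : E →ₗ[ℂ] E) = ⊤ := by
    haveI : CompleteSpace (LinearMap.range (A : E →ₗ[ℂ] E)) :=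
      (show IsClosed ((LinearMap.range (A : E →ₗ[ℂ] E) : Submodule ℂ E) : Set E) by
        have : ((LinearMap.range (A : E →ₗ[ℂ] E) : Submodule ℂ E) : Set E) = Set.range ⇑A := by
          ext x; simp [LinearMap.mem_range]
        rw [this]; exact hclosed).completeSpace_coe
    rw [← Submodule.orthogonal_eq_bot_iff, Submodule.eq_bot_iff]
    intro w hw
    have hw0 : ⟪A w, w⟫ = 0 :=
      (Submodule.mem_orthogonal _ w).mp hw (A w) (LinearMap.mem_range_self _ w)
    have h1 : ‖w‖ ^ 2 ≤ RCLike.re ⟪A w, w⟫ := by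
      rw [heq w]
      have := (RCLike.nonneg_iff (K := ℂ)).mp (hT.inner_nonneg_left w) |>.1
      linarith
    rw [hw0] at h1
    simp only [map_zero] at h1
    have h0 : ‖w‖ ≤ 0 := by nlinarith [norm_nonneg w]
    exact norm_eq_zero.mp (le_antisymm h0 (norm_nonneg w))
  let e := ContinuousLinearEquiv.ofBijective A hinj hsurj
  refine ⟨(e.symm : E →L[ℂ] E), ?_, ?_⟩
  · ext v
    have h : e.symm (A v) = v := by
      have h2 : A v = e v := rfl
      rw [h2, ContinuousLinearEquiv.symm_apply_apply]
    simpa using h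
  · ext v
    have h : A (e.symm v) = v := by
      have h2 : ∀ x, A x = e x := fun _ => rfl
      rw [h2, ContinuousLinearEquiv.apply_symm_apply]
    simpa using h

-- compactness helpers
lemma aux_cpt_comp_left {E F G : Type*} [NormedAddCommGroup E] [NormedSpace ℂ E]
    [NormedAddCommGroup F] [NormedSpace ℂ F] [NormedAddCommGroup G] [NormedSpace ℂ G]
    (g : F →L[ℂ] G) (B : E →L[ℂ] F) (h : IsCompactOperator ⇑B) :
    IsCompactOperator ⇑(g ∘L B) := by
  rw [coe_comp']
  exact h.clm_comp g

lemma aux_cpt_comp_right {E F G : Type*} [NormedAddCommGroup E] [NormedSpace ℂ E]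
    [NormedAddCommGroup F] [NormedSpace ℂ F] [NormedAddCommGroup G] [NormedSpace ℂ G]
    (B : F →L[ℂ] G) (g : E →L[ℂ] F) (h : IsCompactOperator ⇑B) :
    IsCompactOperator ⇑(B ∘L g) := by
  rw [coe_comp']
  exact h.comp_clm g

lemma aux_cpt_mul_left {E : Type*} [NormedAddCommGroup E] [NormedSpace ℂ E]
    (G B : E →L[ℂ] E) (h : IsCompactOperator ⇑B) : IsCompactOperator ⇑(G * B) :=
  aux_cpt_comp_left G B h

lemma aux_cpt_mul_right {E : Type*} [NormedAddCommGroup E] [NormedSpace ℂ E]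
    (B G : E →L[ℂ] E) (h : IsCompactOperator ⇑B) : IsCompactOperator ⇑(B * G) :=
  aux_cpt_comp_right B G h

lemma aux_cpt_sub {E : Type*} [NormedAddCommGroup E] [InnerProductSpace ℂ E]
    (A B : E →L[ℂ] E) (hA : IsCompactOperator ⇑A) (hB : IsCompactOperator ⇑B) :
    IsCompactOperator ⇑(A - B) := by
  have : ⇑(A - B) = ⇑A - ⇑B := by ext v; simp
  rw [this]
  exact hA.sub hB

lemma aux_cpt_add {E : Type*} [NormedAddCommGroup E] [InnerProductSpace ℂ E]
    (A B : E →L[ℂ] E) (hA : IsCompactOperator ⇑A) (hB : IsCompactOperator ⇑B) :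
    IsCompactOperator ⇑(A + B) := by
  have : ⇑(A + B) = ⇑A + ⇑B := by ext v; simp
  rw [this]
  exact hA.add hB

lemma aux_R_inv {E : Type*} [NormedAddCommGroup E] [InnerProductSpace ℂ E]
    (P : E →L[ℂ] E) (z : ℂ) (hz2_0 : z ^ 2 ≠ 0) (hz2_1 : z ^ 2 ≠ 1)
    (hP : P * P = P) :
    (P - z ^ 2 • 1) * ((1 - z ^ 2)⁻¹ • P - (z ^ 2)⁻¹ • (1 - P)) = 1 ∧
    ((1 - z ^ 2)⁻¹ • P - (z ^ 2)⁻¹ • (1 - P)) * (P - z ^ 2 • 1) = 1 := by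
  have h1 : (1 : ℂ) - z ^ 2 ≠ 0 := sub_ne_zero.mpr (Ne.symm hz2_1)
  have hz : z ≠ 0 := by rintro rfl; simp at hz2_0
  constructor
  · simp only [mul_sub, sub_mul, mul_smul_comm, smul_mul_assoc, hP, mul_one, one_mul,
      smul_smul]
    match_scalars <;> field_simp <;> ring
  · simp only [mul_sub, sub_mul, mul_smul_comm, smul_mul_assoc, hP, mul_one, one_mul,
      smul_smul]
    match_scalars <;> field_simp <;> ring

lemma aux_fact {E : Type*} [NormedAddCommGroup E] [InnerProductSpace ℂ E]
    (T : E →L[ℂ] E) (z : ℂ) :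
    (T + z • 1) * (T - z • 1) = T * T - z ^ 2 • 1 ∧
    (T - z • 1) * (T + z • 1) = T * T - z ^ 2 • 1 := by
  constructor
  · simp only [mul_sub, add_mul, smul_mul_assoc, mul_smul_comm, smul_smul, mul_one, one_mul]
    match_scalars <;> ring
  · simp only [mul_add, sub_mul, smul_mul_assoc, mul_smul_comm, smul_smul, mul_one, one_mul]
    match_scalars <;> ring


set_option maxHeartbeats 1600000 in
/-- If `F` has closed range, `F = U|F|` is its polar decomposition, and `X` is a partial
isometry with `F - X` compact, then the essential spectrum of `|F| = U* F` is contained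
in `{0, 1}`. -/
theorem stmt_6 {H : Type*} [NormedAddCommGroup H] [InnerProductSpace ℂ H]
    [CompleteSpace H] (F U X : L2C →L[ℂ] H)
    (hran : IsClosed (Set.range F)) (hpolar : IsPolarDecomp F U)
    (hX : IsPartialIsometry X) (hcpt : IsCompactOperator ⇑(F - X)) :
    ∀ z : ℂ, InEssentialSpectrum (ContinuousLinearMap.adjoint U ∘L F) z → z = 0 ∨ z = 1 := by
  obtain ⟨hUpi, hker, hTpos, hF⟩ := hpolar
  set T : L2C →L[ℂ] L2C := ContinuousLinearMap.adjoint U ∘L F with hTdef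
  intro z hz
  by_contra hcon
  push_neg at hcon
  obtain ⟨hz0, hz1⟩ := hcon
  apply hz
  have hTsa : adjoint T = T := by
    rw [← star_eq_adjoint]; exact hTpos.isSelfAdjoint
  have hTT : T * T = adjoint F ∘L F := by
    have h1 : adjoint F = T ∘L adjoint U := by
      rw [hF, adjoint_comp, hTsa]
    rw [h1, comp_assoc, ← hTdef]
    rfl
  set P : L2C →L[ℂ] L2C := adjoint X ∘L X with hPdef
  have hP : P * P = P := aux_pi_proj X hX
  -- K := T*T - P is compact
  have hKid : T * T - P = adjoint F ∘L (F - X) + adjoint (F - X) ∘L X := by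
    rw [hTT, hPdef, map_sub (adjoint : (L2C →L[ℂ] H) ≃ₗᵢ⋆[ℂ] _)]
    ext v
    simp only [ContinuousLinearMap.sub_apply, ContinuousLinearMap.add_apply,
      ContinuousLinearMap.comp_apply, map_sub, ContinuousLinearMap.sub_apply]
    abel
  have hKc : IsCompactOperator ⇑(T * T - P) := by
    rw [hKid]
    apply aux_cpt_add
    · exact aux_cpt_comp_left _ _ hcpt
    · exact aux_cpt_comp_right _ _ (aux_adjoint_compact _ hcpt)
  rcases eq_or_ne z (-1) with hzm1 | hzm1
  · -- z = -1 : T + 1 is invertible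
    obtain ⟨S, hS1, hS2⟩ := aux_pos_add_one_inv T hTpos
    have hrw : T - z • 1 = T + 1 := by
      rw [hzm1]; simp [neg_smul, sub_neg_eq_add]
    refine ⟨S, ?_, ?_⟩
    · rw [hrw, hS1, sub_self]
      simpa using (isCompactOperator_zero (M₁ := L2C) (M₂ := L2C))
    · rw [hrw, hS2, sub_self]
      simpa using (isCompactOperator_zero (M₁ := L2C) (M₂ := L2C))
  · -- z ∉ {0, 1, -1} : z² ∉ {0,1}, invert P - z²
    have hz2_0 : z ^ 2 ≠ 0 := pow_ne_zero _ hz0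
    have hz2_1 : z ^ 2 ≠ 1 := by
      intro h
      have h2 : (z - 1) * (z + 1) = 0 := by linear_combination h
      rcases mul_eq_zero.mp h2 with h3 | h3
      · exact hz1 (by linear_combination h3)
      · exact hzm1 (by linear_combination h3)
    set R : L2C →L[ℂ] L2C :=
      (1 - z ^ 2)⁻¹ • P - (z ^ 2)⁻¹ • (1 - P) with hRdef
    have hR1 : (P - z ^ 2 • 1) * R = 1 := (aux_R_inv P z hz2_0 hz2_1 hP).1
    have hR2 : R * (P - z ^ 2 • 1) = 1 := (aux_R_inv P z hz2_0 hz2_1 hP).2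
    have hfact : (T + z • 1) * (T - z • 1) = T * T - z ^ 2 • 1 := (aux_fact T z).1
    have hfact' : (T - z • 1) * (T + z • 1) = T * T - z ^ 2 • 1 := (aux_fact T z).2
    set Sl : L2C →L[ℂ] L2C := R * (T + z • 1) with hSl
    set Sr : L2C →L[ℂ] L2C := (T + z • 1) * R with hSr
    have hsplit : (T * T - P) + (P - z ^ 2 • 1) = T * T - z ^ 2 • 1 :=
      sub_add_sub_cancel _ _ _
    have hA1 : Sl * (T - z • 1) - 1 = R * (T * T - P) := by
      rw [hSl, mul_assoc, hfact, ← hsplit, mul_add, hR2, add_sub_cancel_right]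
    have hA2 : (T - z • 1) * Sr - 1 = (T * T - P) * R := by
      rw [hSr, ← mul_assoc, hfact', ← hsplit, add_mul, hR1, add_sub_cancel_right]
    have hA1c : IsCompactOperator ⇑(Sl * (T - z • 1) - 1) := by
      rw [hA1]; exact aux_cpt_mul_left _ _ hKc
    have hA2c : IsCompactOperator ⇑((T - z • 1) * Sr - 1) := by
      rw [hA2]; exact aux_cpt_mul_right _ _ hKc
    refine ⟨Sl, hA1c, ?_⟩
    have hid : (T - z • 1) * Sl - 1 =
        (T - z • 1) * ((Sl * (T - z • 1) - 1) * Sr) -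
        (T - z • 1) * (Sl * ((T - z • 1) * Sr - 1)) + ((T - z • 1) * Sr - 1) := by
      noncomm_ring
    have : IsCompactOperator ⇑((T - z • 1) * Sl - 1) := by
      rw [hid]
      apply aux_cpt_add
      · apply aux_cpt_sub
        · exact aux_cpt_mul_left _ _ (aux_cpt_mul_right _ _ hA1c)
        · exact aux_cpt_mul_left _ _ (aux_cpt_mul_left _ _ hA2c)
      · exact hA2c
    exact this

end
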